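/- Let ℓ = (ℓ₁,…,ℓₙ) be ordered generic and let ℓ' = (ℓ₂,…,ℓ_{n−1}, ℓₙ+ℓ₁). If ℓ is special of type {i, n−2, n−1} with i ≥ 2, then ℓ' (of length n−1) is special of type {i−1, (n−1)−2, (n−1)−1}. Similarly, if n ≥ 6 and ℓ is special of type {n−4, n−3, n−1}, then ℓ' is special of type {(n−1)−4, (n−1)−3, (n−1)−1}. The key observation: a subset J ⊆ {2,…,n−1} is short with respect to ℓ if and only if the corresponding shifted subset is short with respect to ℓ'. -/

import Mathlib

open Finset

/-- The sum of `ℓ` over `J` is less than the sum over the complement in `{1,…,n}`. -/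
def Short (n : ℕ) (ℓ : ℕ → ℝ) (J : Finset ℕ) : Prop :=
  ∑ j ∈ J, ℓ j < ∑ j ∈ Finset.Icc 1 n \ J, ℓ j

/-- `J` is long iff its complement in `{1,…,n}` is short. -/
def Long (n : ℕ) (ℓ : ℕ → ℝ) (J : Finset ℕ) : Prop :=
  Short n ℓ (Finset.Icc 1 n \ J)

/-- All entries positive. -/
def LengthVec (n : ℕ) (ℓ : ℕ → ℝ) : Prop := ∀ i ∈ Finset.Icc 1 n, 0 < ℓ i

/-- `ℓ₁ ≤ … ≤ ℓₙ`. -/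
def OrderedVec (n : ℕ) (ℓ : ℕ → ℝ) : Prop :=
  ∀ i j : ℕ, 1 ≤ i → i ≤ j → j ≤ n → ℓ i ≤ ℓ j

/-- No subset has sum equal to the sum of its complement. -/
def Generic (n : ℕ) (ℓ : ℕ → ℝ) : Prop :=
  ∀ J ⊆ Finset.Icc 1 n, ∑ j ∈ J, ℓ j ≠ ∑ j ∈ Finset.Icc 1 n \ J, ℓ j

/-- Dominance order: an injective order-preserving map `φ : J₁ → J₂` with `x ≤ φ x`. -/
def DomLe (J₁ J₂ : Finset ℕ) : Prop :=
  ∃ φ : ℕ → ℕ, Set.InjOn φ ↑J₁ ∧ (∀ x ∈ J₁, φ x ∈ J₂) ∧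
    (∀ x ∈ J₁, ∀ y ∈ J₁, x < y → φ x < φ y) ∧ ∀ x ∈ J₁, x ≤ φ x

/-- `Ṡ_k(ℓ)`: subsets `J ⊆ {1,…,n−1}` of cardinality `k` with `J ∪ {n}` short. -/
def SdotSet (n : ℕ) (ℓ : ℕ → ℝ) (k : ℕ) : Set (Finset ℕ) :=
  {J | J ⊆ Finset.Icc 1 (n-1) ∧ J.card = k ∧ Short n ℓ (insert n J)}

/-- `Ṡ(ℓ)`: subsets `J ⊆ {1,…,n−1}` with `J ∪ {n}` short. -/
def Sdot (n : ℕ) (ℓ : ℕ → ℝ) : Set (Finset ℕ) :=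
  {J | J ⊆ Finset.Icc 1 (n-1) ∧ Short n ℓ (insert n J)}

/-- Special: `Ṡ_{n−3}(ℓ) = ∅ ≠ Ṡ_{n−4}(ℓ)`. -/
def SpecialVec (n : ℕ) (ℓ : ℕ → ℝ) : Prop :=
  SdotSet n ℓ (n-3) = ∅ ∧ SdotSet n ℓ (n-4) ≠ ∅

/-- `T` is the type of `ℓ`: the minimal three-element long subset of `{1,…,n−1}`. -/
def IsType (n : ℕ) (ℓ : ℕ → ℝ) (T : Finset ℕ) : Prop :=
  T ⊆ Finset.Icc 1 (n-1) ∧ T.card = 3 ∧ Long n ℓ T ∧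
    ∀ T' ⊆ Finset.Icc 1 (n-1), T'.card = 3 → Long n ℓ T' → DomLe T T'

lemma short_iff (n : ℕ) (ℓ : ℕ → ℝ) {J : Finset ℕ} (hJ : J ⊆ Finset.Icc 1 n) :
    Short n ℓ J ↔ ∑ j ∈ J, ℓ j < ∑ j ∈ Finset.Icc 1 n, ℓ j - ∑ j ∈ J, ℓ j := by
  unfold Short
  rw [Finset.sum_sdiff_eq_sub hJ]

lemma long_iff (n : ℕ) (ℓ : ℕ → ℝ) {J : Finset ℕ} (hJ : J ⊆ Finset.Icc 1 n) :
    Long n ℓ J ↔ ∑ j ∈ Finset.Icc 1 n, ℓ j - ∑ j ∈ J, ℓ j < ∑ j ∈ J, ℓ j := by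
  unfold Long
  rw [short_iff n ℓ Finset.sdiff_subset, Finset.sum_sdiff_eq_sub hJ]
  constructor <;> intro <;> linarith

lemma icc_image (a b c : ℕ) : (Finset.Icc a b).image (· + c) = Finset.Icc (a+c) (b+c) := by
  ext x
  simp only [Finset.mem_image, Finset.mem_Icc]
  constructor
  · rintro ⟨y, hy, rfl⟩; omega
  · rintro ⟨h1, h2⟩; exact ⟨x - c, by omega, by omega⟩

section shift
variable {n : ℕ} {ℓ ℓ' : ℕ → ℝ} (hn : 5 ≤ n)
  (hℓ' : ℓ' = fun j => if j = n-1 then ℓ n + ℓ 1 else ℓ (j+1))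
include hn hℓ'

lemma sum_shift {J : Finset ℕ} (hJ : J ⊆ Finset.Icc 1 (n-2)) :
    ∑ j ∈ J, ℓ' j = ∑ j ∈ J.image (· + 1), ℓ j := by
  rw [Finset.sum_image (fun a _ b _ h => by omega)]
  refine Finset.sum_congr rfl fun j hj => ?_
  have h := hJ hj
  simp only [Finset.mem_Icc] at h
  rw [hℓ']
  simp only []
  rw [if_neg (by omega)]

lemma total_eq : ∑ j ∈ Finset.Icc 1 (n-1), ℓ' j = ∑ j ∈ Finset.Icc 1 n, ℓ j := by
  have h1 : Finset.Icc 1 (n-1) = insert (n-1) (Finset.Icc 1 (n-2)) := by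
    ext x; simp only [Finset.mem_insert, Finset.mem_Icc]; omega
  have h2 : Finset.Icc 1 n = insert 1 (insert n (Finset.Icc 2 (n-1))) := by
    ext x; simp only [Finset.mem_insert, Finset.mem_Icc]; omega
  have hni : (n-1) ∉ Finset.Icc 1 (n-2) := by simp only [Finset.mem_Icc]; omega
  have h1i : (1:ℕ) ∉ insert n (Finset.Icc 2 (n-1)) := by
    simp only [Finset.mem_insert, Finset.mem_Icc]; omega
  have hni2 : n ∉ Finset.Icc 2 (n-1) := by simp only [Finset.mem_Icc]; omega
  rw [h1, Finset.sum_insert hni, h2, Finset.sum_insert h1i, Finset.sum_insert hni2,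
    sum_shift hn hℓ' (le_refl _)]
  have h3 : (Finset.Icc 1 (n-2)).image (· + 1) = Finset.Icc 2 (n-1) := by
    rw [icc_image]; congr 1; omega
  have h4 : ℓ' (n-1) = ℓ n + ℓ 1 := by simp [hℓ']
  rw [h3, h4]
  ring

omit hℓ' in
lemma image_succ_subset {J : Finset ℕ} (hJ : J ⊆ Finset.Icc 1 (n-2)) :
    J.image (· + 1) ⊆ Finset.Icc 2 (n-1) := by
  intro x hx
  simp only [Finset.mem_image] at hx
  obtain ⟨a, ha, rfl⟩ := hx
  have h := hJ ha
  simp only [Finset.mem_Icc] at h ⊢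
  omega

lemma short_shift {J : Finset ℕ} (hJ : J ⊆ Finset.Icc 1 (n-2)) :
    Short (n-1) ℓ' J ↔ Short n ℓ (J.image (· + 1)) := by
  have hK : J.image (· + 1) ⊆ Finset.Icc 1 n :=
    (image_succ_subset hn hJ).trans (Finset.Icc_subset_Icc (by omega) (by omega))
  rw [short_iff (n-1) ℓ' (hJ.trans (Finset.Icc_subset_Icc (by omega) (by omega))),
    short_iff n ℓ hK, sum_shift hn hℓ' hJ, total_eq hn hℓ']

lemma long_shift {J : Finset ℕ} (hJ : J ⊆ Finset.Icc 1 (n-2)) :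
    Long (n-1) ℓ' J ↔ Long n ℓ (J.image (· + 1)) := by
  have hK : J.image (· + 1) ⊆ Finset.Icc 1 n :=
    (image_succ_subset hn hJ).trans (Finset.Icc_subset_Icc (by omega) (by omega))
  rw [long_iff (n-1) ℓ' (hJ.trans (Finset.Icc_subset_Icc (by omega) (by omega))),
    long_iff n ℓ hK, sum_shift hn hℓ' hJ, total_eq hn hℓ']

lemma short_shift' {J : Finset ℕ} (hJ : J ⊆ Finset.Icc 1 (n-2)) :
    Short (n-1) ℓ' (insert (n-1) J) ↔
      Short n ℓ (insert n (insert 1 (J.image (· + 1)))) := by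
  have hKicc := image_succ_subset hn hJ
  have hsub1 : insert (n-1) J ⊆ Finset.Icc 1 (n-1) := by
    refine Finset.insert_subset (by simp only [Finset.mem_Icc]; omega)
      (hJ.trans (Finset.Icc_subset_Icc (by omega) (by omega)))
  have hsub2 : insert n (insert 1 (J.image (· + 1))) ⊆ Finset.Icc 1 n := by
    refine Finset.insert_subset (by simp only [Finset.mem_Icc]; omega)
      (Finset.insert_subset (by simp only [Finset.mem_Icc]; omega)
        (hKicc.trans (Finset.Icc_subset_Icc (by omega) (by omega))))
  have hn1 : (n-1) ∉ J := fun h => by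
    have := hJ h; simp only [Finset.mem_Icc] at this; omega
  have hnK : n ∉ insert 1 (J.image (· + 1)) := by
    simp only [Finset.mem_insert]
    push_neg
    refine ⟨by omega, fun h => ?_⟩
    have := hKicc h; simp only [Finset.mem_Icc] at this; omega
  have h1K : (1:ℕ) ∉ J.image (· + 1) := fun h => by
    have := hKicc h; simp only [Finset.mem_Icc] at this; omega
  rw [short_iff (n-1) ℓ' hsub1, short_iff n ℓ hsub2,
    Finset.sum_insert hn1, Finset.sum_insert hnK, Finset.sum_insert h1K,
    sum_shift hn hℓ' hJ, total_eq hn hℓ']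
  have : ℓ' (n-1) = ℓ n + ℓ 1 := by simp [hℓ']
  rw [this]
  constructor <;> intro <;> linarith

omit hℓ' in
lemma domle_shift {T K : Finset ℕ} (hT : T ⊆ Finset.Icc 2 (n-1))
    (hK : K ⊆ Finset.Icc 2 (n-1)) (h : DomLe T K) :
    DomLe (T.image (fun i => i - 1)) (K.image (fun i => i - 1)) := by
  obtain ⟨φ, _hinj, hmaps, hmono, hle⟩ := h
  have hmem : ∀ x ∈ T.image (fun i => i - 1), x + 1 ∈ T := by
    intro x hx
    simp only [Finset.mem_image] at hx
    obtain ⟨a, ha, rfl⟩ := hx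
    have h2 := hT ha
    simp only [Finset.mem_Icc] at h2
    have : a - 1 + 1 = a := by omega
    rw [this]; exact ha
  have hφ2 : ∀ x ∈ T.image (fun i => i - 1), 2 ≤ φ (x+1) := by
    intro x hx
    have := hK (hmaps _ (hmem x hx))
    simp only [Finset.mem_Icc] at this
    exact this.1
  have hmono' : ∀ x ∈ T.image (fun i => i - 1), ∀ y ∈ T.image (fun i => i - 1),
      x < y → φ (x+1) - 1 < φ (y+1) - 1 := by
    intro x hx y hy hxy
    have h1 := hmono _ (hmem x hx) _ (hmem y hy) (by omega)
    have h2 := hφ2 x hx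
    have h3 := hφ2 y hy
    omega
  refine ⟨fun x => φ (x+1) - 1, ?_, ?_, hmono', ?_⟩
  · intro x hx y hy hxy
    rw [Finset.mem_coe] at hx hy
    rcases lt_trichotomy x y with h | h | h
    · exact absurd hxy (Nat.ne_of_lt (hmono' x hx y hy h))
    · exact h
    · exact absurd hxy.symm (Nat.ne_of_lt (hmono' y hy x hx h))
  · intro x hx
    simp only [Finset.mem_image]
    exact ⟨φ (x+1), hmaps _ (hmem x hx), rfl⟩
  · intro x hx
    have := hle _ (hmem x hx)
    show x ≤ φ (x+1) - 1
    omega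

lemma special_shift (hord : OrderedVec n ℓ) {T : Finset ℕ}
    (hT2 : T ⊆ Finset.Icc 2 (n-1)) (hsp : SpecialVec n ℓ) (hty : IsType n ℓ T) :
    SpecialVec (n-1) ℓ' ∧ IsType (n-1) ℓ' (T.image (fun i => i - 1)) := by
  have e1 : n - 1 - 1 = n - 2 := by omega
  have hsucc_inj : Function.Injective (· + 1 : ℕ → ℕ) := add_left_injective 1
  constructor
  · constructor
    · -- SdotSet (n-1) ℓ' (n-1-3) = ∅
      rw [Set.eq_empty_iff_forall_notMem]
      intro J hJ
      simp only [SdotSet, Set.mem_setOf_eq] at hJ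
      obtain ⟨hJs, hJc, hJshort⟩ := hJ
      rw [e1] at hJs
      rw [short_shift' hn hℓ' hJs] at hJshort
      have hKicc := image_succ_subset hn hJs
      have h1K : (1:ℕ) ∉ J.image (· + 1) := fun h => by
        have := hKicc h; simp only [Finset.mem_Icc] at this; omega
      have hmem : insert 1 (J.image (· + 1)) ∈ SdotSet n ℓ (n-3) := by
        refine ⟨Finset.insert_subset (by simp only [Finset.mem_Icc]; omega)
          (hKicc.trans (Finset.Icc_subset_Icc (by omega) (by omega))), ?_, hJshort⟩
        rw [Finset.card_insert_of_notMem h1K, Finset.card_image_of_injective _ hsucc_inj]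
        omega
      rw [hsp.1] at hmem
      exact hmem
    · -- SdotSet (n-1) ℓ' (n-1-4) ≠ ∅
      obtain ⟨J₀, hJ₀⟩ := Set.nonempty_iff_ne_empty.mpr hsp.2
      simp only [SdotSet, Set.mem_setOf_eq] at hJ₀
      obtain ⟨hs0, hc0, hshort0⟩ := hJ₀
      obtain ⟨J₁, hs1, hc1, hshort1, h1mem⟩ : ∃ J₁, J₁ ⊆ Finset.Icc 1 (n-1) ∧
          J₁.card = n - 4 ∧ Short n ℓ (insert n J₁) ∧ 1 ∈ J₁ := by
        by_cases h1 : 1 ∈ J₀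
        · exact ⟨J₀, hs0, hc0, hshort0, h1⟩
        · have hne : J₀.Nonempty := Finset.card_pos.mp (by omega)
          obtain ⟨a, ha⟩ := hne
          have hasub := hs0 ha
          simp only [Finset.mem_Icc] at hasub
          have hle : ℓ 1 ≤ ℓ a := hord 1 a le_rfl hasub.1 (by omega)
          have hnJ0 : n ∉ J₀ := fun h => by
            have := hs0 h; simp only [Finset.mem_Icc] at this; omega
          have hn1' : n ∉ insert 1 (J₀.erase a) := by
            simp only [Finset.mem_insert, Finset.mem_erase]
            push_neg
            exact ⟨by omega, fun _ => hnJ0⟩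
          have h1e : (1:ℕ) ∉ J₀.erase a := fun h => h1 (Finset.mem_of_mem_erase h)
          refine ⟨insert 1 (J₀.erase a), ?_, ?_, ?_, Finset.mem_insert_self _ _⟩
          · exact Finset.insert_subset (by simp only [Finset.mem_Icc]; omega)
              ((Finset.erase_subset _ _).trans hs0)
          · rw [Finset.card_insert_of_notMem h1e, Finset.card_erase_of_mem ha]
            omega
          · have hsub0 : insert n J₀ ⊆ Finset.Icc 1 n :=
              Finset.insert_subset (by simp only [Finset.mem_Icc]; omega)
                (hs0.trans (Finset.Icc_subset_Icc (by omega) (by omega)))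
            have hsub1 : insert n (insert 1 (J₀.erase a)) ⊆ Finset.Icc 1 n :=
              Finset.insert_subset (by simp only [Finset.mem_Icc]; omega)
                (Finset.insert_subset (by simp only [Finset.mem_Icc]; omega)
                  (((Finset.erase_subset _ _).trans hs0).trans
                    (Finset.Icc_subset_Icc (by omega) (by omega))))
            rw [short_iff n ℓ hsub0, Finset.sum_insert hnJ0] at hshort0
            rw [short_iff n ℓ hsub1, Finset.sum_insert hn1', Finset.sum_insert h1e,
              Finset.sum_erase_eq_sub ha]
            linarith
      -- now shift down
      have hKicc : J₁.erase 1 ⊆ Finset.Icc 2 (n-1) := by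
        intro x hx
        simp only [Finset.mem_erase] at hx
        have := hs1 hx.2
        simp only [Finset.mem_Icc] at this ⊢
        omega
      have hdown : (J₁.erase 1).image (fun i => i - 1) ⊆ Finset.Icc 1 (n-2) := by
        intro x hx
        simp only [Finset.mem_image] at hx
        obtain ⟨a, ha, rfl⟩ := hx
        have := hKicc ha
        simp only [Finset.mem_Icc] at this ⊢
        omega
      have hinjK : Set.InjOn (fun i => i - 1) ↑(J₁.erase 1) := by
        intro x hx y hy hxy
        rw [Finset.mem_coe] at hx hy
        have h1 := hKicc hx; have h2 := hKicc hy
        simp only [Finset.mem_Icc] at h1 h2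
        have hxy' : x - 1 = y - 1 := hxy
        omega
      have himg : ((J₁.erase 1).image (fun i => i - 1)).image (· + 1) = J₁.erase 1 := by
        rw [Finset.image_image]
        rw [Finset.image_congr (g := id) (fun x hx => by
          have := hKicc hx; simp only [Finset.mem_Icc] at this
          simp only [Function.comp, id]; omega)]
        exact Finset.image_id
      refine Set.nonempty_iff_ne_empty.mp ⟨(J₁.erase 1).image (fun i => i - 1), ?_⟩
      refine ⟨by rw [e1]; exact hdown, ?_, ?_⟩
      · rw [Finset.card_image_of_injOn hinjK, Finset.card_erase_of_mem h1mem, hc1]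
        omega
      · rw [short_shift' hn hℓ' hdown, himg, Finset.insert_erase h1mem]
        exact hshort1
  · -- IsType
    have hT1 : T ⊆ Finset.Icc 1 (n-1) := hT2.trans (Finset.Icc_subset_Icc (by omega) le_rfl)
    have hT'sub : T.image (fun i => i - 1) ⊆ Finset.Icc 1 (n-2) := by
      intro x hx
      simp only [Finset.mem_image] at hx
      obtain ⟨a, ha, rfl⟩ := hx
      have := hT2 ha
      simp only [Finset.mem_Icc] at this ⊢
      omega
    have hinjT : Set.InjOn (fun i => i - 1) ↑T := by
      intro x hx y hy hxy
      rw [Finset.mem_coe] at hx hy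
      have h1 := hT2 hx; have h2 := hT2 hy
      simp only [Finset.mem_Icc] at h1 h2
      have hxy' : x - 1 = y - 1 := hxy
      omega
    have himgT : (T.image (fun i => i - 1)).image (· + 1) = T := by
      rw [Finset.image_image]
      rw [Finset.image_congr (g := id) (fun x hx => by
        have := hT2 hx; simp only [Finset.mem_Icc] at this
        simp only [Function.comp, id]; omega)]
      exact Finset.image_id
    refine ⟨by rw [e1]; exact hT'sub, ?_, ?_, ?_⟩
    · rw [Finset.card_image_of_injOn hinjT]; exact hty.2.1
    · rw [long_shift hn hℓ' hT'sub, himgT]; exact hty.2.2.1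
    · intro T'' hT''sub hT''card hT''long
      rw [e1] at hT''sub
      have hK2 := image_succ_subset hn hT''sub
      have hKcard : (T''.image (· + 1)).card = 3 := by
        rw [Finset.card_image_of_injective _ hsucc_inj, hT''card]
      have hKlong : Long n ℓ (T''.image (· + 1)) := by
        rw [← long_shift hn hℓ' hT''sub]; exact hT''long
      have hdom := hty.2.2.2 (T''.image (· + 1))
        (hK2.trans (Finset.Icc_subset_Icc (by omega) le_rfl)) hKcard hKlong
      have hdom' := domle_shift hn hT2 hK2 hdom
      have hback : (T''.image (· + 1)).image (fun i => i - 1) = T'' := by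
        rw [Finset.image_image]
        rw [Finset.image_congr (g := id) (fun x _hx => by
          simp only [Function.comp, id]; omega)]
        exact Finset.image_id
      rwa [hback] at hdom'
end shift

/-- Passing from ℓ to ℓ' = (ℓ₂,…,ℓ_{n−1},ℓₙ+ℓ₁): a subset
J ⊆ {2,…,n−1} is short w.r.t. ℓ iff the shifted subset is short w.r.t. ℓ'; if ℓ
is special of type {i,n−2,n−1} with i ≥ 2 then ℓ' is special of type
{i−1,n−3,n−2}; and if n ≥ 6 and ℓ is special of type {n−4,n−3,n−1} then ℓ' is
special of type {n−5,n−4,n−2}. -/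
theorem type_induction (n : ℕ) (ℓ : ℕ → ℝ) (hn : 5 ≤ n)
    (hpos : LengthVec n ℓ) (hord : OrderedVec n ℓ) (hgen : Generic n ℓ)
    (ℓ' : ℕ → ℝ)
    (hℓ' : ℓ' = fun j => if j = n-1 then ℓ n + ℓ 1 else ℓ (j+1)) :
    (∀ J ⊆ Finset.Icc 2 (n-1),
      (Short n ℓ J ↔ Short (n-1) ℓ' (J.image (fun i => i - 1)))) ∧
    (∀ i : ℕ, 2 ≤ i → i ≤ n-4 → SpecialVec n ℓ → IsType n ℓ {i, n-2, n-1} →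
      SpecialVec (n-1) ℓ' ∧ IsType (n-1) ℓ' {i-1, n-3, n-2}) ∧
    (6 ≤ n → SpecialVec n ℓ → IsType n ℓ {n-4, n-3, n-1} →
      SpecialVec (n-1) ℓ' ∧ IsType (n-1) ℓ' {n-5, n-4, n-2}) := by
  refine ⟨?_, ?_, ?_⟩
  · intro J hJ
    have hJ' : J.image (fun i => i - 1) ⊆ Finset.Icc 1 (n-2) := by
      intro x hx
      simp only [Finset.mem_image] at hx
      obtain ⟨a, ha, rfl⟩ := hx
      have := hJ ha
      simp only [Finset.mem_Icc] at this ⊢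
      omega
    have himg : (J.image (fun i => i - 1)).image (· + 1) = J := by
      rw [Finset.image_image]
      rw [Finset.image_congr (g := id) (fun x hx => by
        have := hJ hx; simp only [Finset.mem_Icc] at this
        simp only [Function.comp, id]; omega)]
      exact Finset.image_id
    have h := short_shift hn hℓ' hJ'
    rw [himg] at h
    exact h.symm
  · intro i hi2 hi4 hsp hty
    have hT2 : ({i, n-2, n-1} : Finset ℕ) ⊆ Finset.Icc 2 (n-1) := by
      simp only [Finset.insert_subset_iff, Finset.singleton_subset_iff, Finset.mem_Icc]
      omega
    have h := special_shift hn hℓ' hord hT2 hsp hty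
    have himg : ({i, n-2, n-1} : Finset ℕ).image (fun x => x - 1) = {i-1, n-3, n-2} := by
      simp only [Finset.image_insert, Finset.image_singleton]
      have e2 : n - 2 - 1 = n - 3 := by omega
      have e3 : n - 1 - 1 = n - 2 := by omega
      rw [e2, e3]
    rwa [himg] at h
  · intro hn6 hsp hty
    have hT2 : ({n-4, n-3, n-1} : Finset ℕ) ⊆ Finset.Icc 2 (n-1) := by
      simp only [Finset.insert_subset_iff, Finset.singleton_subset_iff, Finset.mem_Icc]
      omega
    have h := special_shift hn hℓ' hord hT2 hsp hty
    have himg : ({n-4, n-3, n-1} : Finset ℕ).image (fun x => x - 1) = {n-5, n-4, n-2} := by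
      simp only [Finset.image_insert, Finset.image_singleton]
      have e2 : n - 4 - 1 = n - 5 := by omega
      have e3 : n - 3 - 1 = n - 4 := by omega
      have e4 : n - 1 - 1 = n - 2 := by omega
      rw [e2, e3, e4]
    rwa [himg] at h
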